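/- In A = F_2[X_1,...,X_m]/(X_1^2-1,...,X_m^2-1) with maximal ideal M, one has M^{m+1} = {0}, and the powers form a strictly decreasing chain {0} = M^{m+1} ⊂ M^m ⊂ ... ⊂ M^2 ⊂ M ⊂ A. -/

import Mathlib

set_option synthInstance.maxHeartbeats 1000000
set_option maxHeartbeats 1000000

open MvPolynomial

noncomputable def gI (m : ℕ) (I : Finset (Fin m)) : MvPolynomial (Fin m) (ZMod 2) :=
  ∏ i ∈ I, (X i - 1)

noncomputable def XI (m : ℕ) (I : Finset (Fin m)) : MvPolynomial (Fin m) (ZMod 2) :=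
  ∏ i ∈ I, X i

/-- The ideal (X₁²-1, …, Xₘ²-1). -/
noncomputable def relIdeal (m : ℕ) : Ideal (MvPolynomial (Fin m) (ZMod 2)) :=
  Ideal.span {p | ∃ i : Fin m, p = X i ^ 2 - 1}

/-- The ambient algebra A = F₂[X₁,…,Xₘ]/(X₁²-1,…,Xₘ²-1). -/
abbrev Amb (m : ℕ) := MvPolynomial (Fin m) (ZMod 2) ⧸ relIdeal m

/-- The ideal M of A generated by the images of the Xᵢ - 1. -/
noncomputable def Mideal (m : ℕ) : Ideal (Amb m) :=
  Ideal.span {a | ∃ i : Fin m, a = Ideal.Quotient.mk (relIdeal m) (X i - 1)}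

lemma two_eq_zero' (m : ℕ) : (2 : MvPolynomial (Fin m) (ZMod 2)) = 0 := by
  rw [← map_ofNat (C : ZMod 2 →+* MvPolynomial (Fin m) (ZMod 2)) 2,
    show ((OfNat.ofNat 2 : ZMod 2)) = 0 from rfl, map_zero]

lemma sq_gen_mem (m : ℕ) (j : Fin m) :
    (X j - 1 : MvPolynomial (Fin m) (ZMod 2)) ^ 2 ∈ relIdeal m := by
  have h : (X j - 1 : MvPolynomial (Fin m) (ZMod 2)) ^ 2 = X j ^ 2 - 1 := by
    linear_combination (1 - X j) * two_eq_zero' m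
  rw [h]
  exact Ideal.subset_span ⟨j, rfl⟩

lemma gen_sq_zero (m : ℕ) (j : Fin m) :
    (Ideal.Quotient.mk (relIdeal m) (X j - 1)) ^ 2 = 0 := by
  rw [← map_pow, Ideal.Quotient.eq_zero_iff_mem]
  exact sq_gen_mem m j

lemma prod_mem_pow {R : Type*} [CommRing R] (I : Ideal R) {ι : Type*} (s : Finset ι)
    (f : ι → R) (h : ∀ i ∈ s, f i ∈ I) : (∏ i ∈ s, f i) ∈ I ^ s.card := by
  classical
  induction s using Finset.induction_on with
  | empty => simp
  | @insert a s ha ih =>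
    rw [Finset.prod_insert ha, Finset.card_insert_of_notMem ha, pow_succ, mul_comm]
    exact Ideal.mul_mem_mul (h a (Finset.mem_insert_self a s))
      (ih fun i hi => h i (Finset.mem_insert_of_mem hi))

lemma gI_mem (m : ℕ) (S : Finset (Fin m)) :
    Ideal.Quotient.mk (relIdeal m) (gI m S) ∈ Mideal m ^ S.card := by
  rw [gI, map_prod]
  exact prod_mem_pow _ _ _ fun i _ => Ideal.subset_span ⟨i, rfl⟩

lemma Mpow_eq_bot (m : ℕ) : Mideal m ^ (m + 1) = ⊥ := by
  rw [Mideal, Ideal.span, Submodule.span_pow, eq_bot_iff, Submodule.span_le]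
  intro a ha
  rw [SetLike.mem_coe, Submodule.mem_bot]
  obtain ⟨f, rfl⟩ := Set.mem_pow.mp ha
  choose g hg using fun k => (f k).2
  rw [List.prod_ofFn]
  have hgp : ∀ k, ((f k : Amb m)) = Ideal.Quotient.mk (relIdeal m) (X (g k) - 1) := hg
  obtain ⟨a, b, hab, heq⟩ := Fintype.exists_ne_map_eq_of_card_lt g (by simp)
  have hb : b ∈ Finset.univ.erase a := Finset.mem_erase.2 ⟨hab.symm, Finset.mem_univ b⟩
  rw [← Finset.mul_prod_erase Finset.univ _ (Finset.mem_univ a),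
    ← Finset.mul_prod_erase _ _ hb, ← mul_assoc, hgp a, hgp b, ← heq, ← sq,
    gen_sq_zero, zero_mul]

noncomputable def psi (m : ℕ) :
    MvPolynomial (Fin m) (ZMod 2) →+* AddMonoidAlgebra (ZMod 2) (Fin m → ZMod 2) :=
  (MvPolynomial.aeval fun i =>
    (AddMonoidAlgebra.single (Pi.single i 1) 1 :
      AddMonoidAlgebra (ZMod 2) (Fin m → ZMod 2))).toRingHom

lemma psi_rel (m : ℕ) : relIdeal m ≤ RingHom.ker (psi m) := by
  rw [relIdeal, Ideal.span_le]
  rintro p ⟨i, rfl⟩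
  rw [SetLike.mem_coe, RingHom.mem_ker, map_sub, map_one, map_pow]
  have : psi m (X i) = AddMonoidAlgebra.single (Pi.single i 1) 1 := by
    simp [psi]
  rw [this, AddMonoidAlgebra.single_pow]
  have h0 : (2 : ℕ) • (Pi.single i 1 : Fin m → ZMod 2) = 0 := by
    rw [two_smul, ← Pi.single_add, show ((1 : ZMod 2) + 1) = 0 from rfl, Pi.single_zero]
  rw [h0, one_pow, ← AddMonoidAlgebra.one_def, sub_self]

lemma psi_gI_ne (m : ℕ) : psi m (gI m Finset.univ) ≠ 0 := by
  classical
  have hx : psi m (gI m Finset.univ) =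
      ∏ i : Fin m, ((AddMonoidAlgebra.single (Pi.single i 1) 1 :
        AddMonoidAlgebra (ZMod 2) (Fin m → ZMod 2)) + 1) := by
    rw [gI, map_prod]
    refine Finset.prod_congr rfl fun i _ => ?_
    rw [map_sub, map_one]
    have : psi m (X i) = AddMonoidAlgebra.single (Pi.single i 1) 1 := by simp [psi]
    rw [this, sub_eq_add_neg]
    congr 1
    rw [neg_eq_iff_add_eq_zero, AddMonoidAlgebra.one_def]
    show AddMonoidAlgebra.single 0 (1 : ZMod 2) + AddMonoidAlgebra.single 0 1 = 0
    rw [← AddMonoidAlgebra.single_add, show ((1 : ZMod 2) + 1) = 0 from rfl,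
      AddMonoidAlgebra.single_zero]
  rw [hx, Finset.prod_add]
  intro h0
  have hs : (∑ t ∈ (Finset.univ : Finset (Fin m)).powerset,
      (Finsupp.single (∑ i ∈ t, Pi.single i (1 : ZMod 2)) (1 : ZMod 2) :
        (Fin m → ZMod 2) →₀ ZMod 2)) = 0 := by
    apply AddMonoidAlgebra.ofCoeff_injective
    rw [AddMonoidAlgebra.ofCoeff_sum, AddMonoidAlgebra.ofCoeff_zero, ← h0]
    refine (Finset.sum_congr rfl fun t _ => ?_).symm
    rw [Finset.prod_const_one, mul_one, AddMonoidAlgebra.prod_single, Finset.prod_const_one,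
      AddMonoidAlgebra.ofCoeff_single]
  have hu := DFunLike.congr_fun hs (fun _ => (1 : ZMod 2))
  rw [Finsupp.finset_sum_apply] at hu
  have key : ∀ t : Finset (Fin m),
      ((∑ i ∈ t, Pi.single i (1 : ZMod 2)) = fun _ => (1 : ZMod 2)) ↔ t = Finset.univ := by
    intro t
    constructor
    · intro h
      rw [Finset.eq_univ_iff_forall]
      intro j
      by_contra hj
      have := congrFun h j
      rw [Finset.sum_apply, Finset.sum_pi_single, if_neg hj] at this
      exact zero_ne_one this
    · rintro rfl
      funext j
      rw [Finset.sum_apply, Finset.sum_pi_single, if_pos (Finset.mem_univ j)]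
  have hrw : ∀ t ∈ (Finset.univ : Finset (Fin m)).powerset,
      ((Finsupp.single (∑ i ∈ t, Pi.single i (1 : ZMod 2)) (1 : ZMod 2) :
        (Fin m → ZMod 2) →₀ ZMod 2) (fun _ => (1 : ZMod 2)))
        = if t = Finset.univ then (1 : ZMod 2) else 0 := by
    intro t _
    rw [Finsupp.single_apply]
    by_cases h : t = Finset.univ
    · rw [if_pos h, if_pos ((key t).mpr h)]
    · rw [if_neg h, if_neg (fun hc => h ((key t).mp hc))]
  rw [Finset.sum_congr rfl hrw,
    Finset.sum_ite_eq' _ (Finset.univ : Finset (Fin m)) (fun _ => (1 : ZMod 2))] at hu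
  simp at hu

lemma gI_univ_ne_zero (m : ℕ) :
    Ideal.Quotient.mk (relIdeal m) (gI m Finset.univ) ≠ 0 := by
  intro h
  rw [Ideal.Quotient.eq_zero_iff_mem] at h
  exact psi_gI_ne m (psi_rel m h)

/-- M^{m+1} = 0 and the chain {0} = M^{m+1} ⊂ Mᵐ ⊂ ⋯ ⊂ M² ⊂ M ⊂ A
is strictly decreasing. -/
theorem stmt3 (m : ℕ) :
    Mideal m ^ (m + 1) = ⊥ ∧
    ∀ l : ℕ, l ≤ m → Mideal m ^ (l + 1) < Mideal m ^ l := by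
  refine ⟨Mpow_eq_bot m, fun l hl => ?_⟩
  refine lt_of_le_of_ne (Ideal.pow_le_pow_right (Nat.le_succ l)) ?_
  intro heq
  obtain ⟨S, -, hcard⟩ := Finset.exists_subset_card_eq
    (show l ≤ (Finset.univ : Finset (Fin m)).card by simpa using hl)
  have h1 := gI_mem m S
  rw [hcard, ← heq] at h1
  have h2 := gI_mem m Sᶜ
  have hcc : Sᶜ.card = m - l := by
    rw [Finset.card_compl, hcard]; simp
  rw [hcc] at h2
  have h3 := Ideal.mul_mem_mul h1 h2
  rw [← pow_add (Mideal m), show l + 1 + (m - l) = m + 1 by omega, Mpow_eq_bot,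
    Submodule.mem_bot, ← map_mul] at h3
  have hprod : gI m S * gI m Sᶜ = gI m Finset.univ := by
    rw [gI, gI, gI, Finset.prod_mul_prod_compl]
  rw [hprod] at h3
  exact gI_univ_ne_zero m h3
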